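/- (The total order symmetry admits least supports.) Let D = ℚ and let G ≤ Sym(ℚ) be the group of all monotone (order-preserving) bijections of the rational numbers. For every G-set X, every x ∈ X, and all finite sets C, C' ⊆ ℚ: if C supports x and C' supports x, then C ∩ C' supports x. Consequently, every element of every nominal G-set has a least finite support. -/

import Mathlib

/-- The group of all monotone (order-preserving) bijections of ℚ, as a subgroup of
Sym(ℚ). -/
def monoPerm : Subgroup (Equiv.Perm ℚ) where
  carrier := {π : Equiv.Perm ℚ | Monotone ⇑π}
  one_mem' := fun _ _ h => h
  mul_mem' := by
    intro a b ha hb x y h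
    exact ha (hb h)
  inv_mem' := by
    intro a ha x y hxy
    by_contra hcon
    push_neg at hcon
    have h1 : a (a⁻¹ y) ≤ a (a⁻¹ x) := ha hcon.le
    rw [Equiv.Perm.inv_def, Equiv.apply_symm_apply, Equiv.apply_symm_apply] at h1
    have hxy' : x = y := le_antisymm hxy h1
    subst hxy'
    exact lt_irrefl _ hcon

namespace TOS


/-- piecewise linear bump: identity outside `(u,v)`, maps `t ↦ t'` inside. -/
def bump (u t t' v x : ℚ) : ℚ :=
  if x ≤ u ∨ v ≤ x then x
  else if x ≤ t then u + (x - u) * ((t' - u) / (t - u))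
  else v + (x - v) * ((v - t') / (v - t))

variable {u t t' v x : ℚ}

lemma bump_out (h : x ≤ u ∨ v ≤ x) : bump u t t' v x = x := if_pos h

lemma bump_mid1 (h1 : u < x) (h2 : x < v) (h3 : x ≤ t) :
    bump u t t' v x = u + (x - u) * ((t' - u) / (t - u)) := by
  unfold bump
  rw [if_neg (by push_neg; exact ⟨h1, h2⟩), if_pos h3]

lemma bump_mid2 (h1 : u < x) (h2 : x < v) (h3 : ¬ x ≤ t) :
    bump u t t' v x = v + (x - v) * ((v - t') / (v - t)) := by
  unfold bump
  rw [if_neg (by push_neg; exact ⟨h1, h2⟩), if_neg h3]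

lemma bump_low (hut : u < t) (htv : t < v) (hut' : u < t')
    (h1 : u < x) (h2 : x ≤ t) :
    u < bump u t t' v x ∧ bump u t t' v x ≤ t' := by
  rw [bump_mid1 h1 (lt_of_le_of_lt h2 htv) h2]
  have hk : 0 < (t' - u) / (t - u) := div_pos (by linarith) (by linarith)
  have hk2 : (t - u) * ((t' - u) / (t - u)) = t' - u :=
    mul_div_cancel₀ _ (by linarith)
  constructor
  · nlinarith
  · nlinarith [mul_le_mul_of_nonneg_right (sub_le_sub_right h2 u) hk.le]

lemma bump_high (hut : u < t) (htv : t < v) (ht'v : t' < v)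
    (h1 : t < x) (h2 : x < v) :
    t' < bump u t t' v x ∧ bump u t t' v x < v := by
  rw [bump_mid2 (hut.trans h1) h2 (not_le.2 h1)]
  have hk : 0 < (v - t') / (v - t) := div_pos (by linarith) (by linarith)
  have hk2 : (v - t) * ((v - t') / (v - t)) = v - t' :=
    mul_div_cancel₀ _ (by linarith)
  constructor
  · nlinarith [mul_lt_mul_of_pos_right (sub_lt_sub_right h1 v) hk]
  · nlinarith [mul_neg_of_neg_of_pos (show x - v < 0 by linarith) hk]

lemma bump_t (hut : u < t) (htv : t < v) : bump u t t' v t = t' := by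
  rw [bump_mid1 hut htv le_rfl]
  have : t - u ≠ 0 := by linarith
  field_simp
  ring

lemma bump_inv (hut : u < t) (htv : t < v) (hut' : u < t') (ht'v : t' < v) (x : ℚ) :
    bump u t' t v (bump u t t' v x) = x := by
  rcases le_or_gt x u with h | h
  · rw [bump_out (Or.inl h), bump_out (Or.inl h)]
  rcases le_or_gt v x with h2 | h2
  · rw [bump_out (Or.inr h2), bump_out (Or.inr h2)]
  have htu : t - u ≠ 0 := by linarith
  have ht'u : t' - u ≠ 0 := by linarith
  have hvt : v - t ≠ 0 := by linarith
  have hvt' : v - t' ≠ 0 := by linarith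
  rcases le_or_gt x t with h3 | h3
  · have hb := bump_low hut htv hut' h h3
    rw [bump_mid1 h (h2) h3] at hb ⊢
    rw [bump_mid1 hb.1 (lt_of_le_of_lt hb.2 ht'v) hb.2]
    field_simp
    ring
  · have hb := bump_high hut htv ht'v h3 h2
    rw [bump_mid2 h h2 (not_le.2 h3)] at hb ⊢
    rw [bump_mid2 (hut'.trans hb.1) hb.2 (not_le.2 hb.1)]
    field_simp
    ring

lemma bump_mono (hut : u < t) (htv : t < v) (hut' : u < t') (ht'v : t' < v) :
    Monotone (bump u t t' v) := by
  intro x y hxy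
  rcases le_or_gt x u with h1 | h1
  · rw [bump_out (Or.inl h1)]
    rcases le_or_gt y u with g1 | g1
    · rw [bump_out (Or.inl g1)]; exact hxy
    rcases le_or_gt v y with g2 | g2
    · rw [bump_out (Or.inr g2)]; exact hxy
    rcases le_or_gt y t with g3 | g3
    · have := (bump_low hut htv hut' g1 g3).1; linarith
    · have := (bump_high hut htv ht'v g3 g2).1; linarith
  rcases le_or_gt v x with h2 | h2
  · rw [bump_out (Or.inr h2), bump_out (Or.inr (h2.trans hxy))]; exact hxy
  rcases le_or_gt x t with h3 | h3
  · rcases le_or_gt y t with g3 | g3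
    · rw [bump_mid1 h1 (lt_of_le_of_lt h3 htv) h3,
        bump_mid1 (lt_of_lt_of_le h1 hxy) (lt_of_le_of_lt g3 htv) g3]
      have hk : 0 ≤ (t' - u) / (t - u) := (div_pos (by linarith) (by linarith)).le
      have := mul_le_mul_of_nonneg_right (sub_le_sub_right hxy u) hk
      linarith
    · rcases le_or_gt v y with g2 | g2
      · rw [bump_out (Or.inr g2)]
        have := (bump_low hut htv hut' h1 h3).2; linarith
      · have hx := (bump_low hut htv hut' h1 h3).2
        have hy := (bump_high hut htv ht'v g3 g2).1
        linarith
  · have g3 : t < y := lt_of_lt_of_le h3 hxy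
    rcases le_or_gt v y with g2 | g2
    · rw [bump_out (Or.inr g2)]
      have := (bump_high hut htv ht'v h3 h2).2; linarith
    · rw [bump_mid2 (hut.trans h3) h2 (not_le.2 h3),
        bump_mid2 (hut.trans g3) g2 (not_le.2 g3)]
      have hk : 0 ≤ (v - t') / (v - t) := (div_pos (by linarith) (by linarith)).le
      have := mul_le_mul_of_nonneg_right (sub_le_sub_right hxy v) hk
      linarith

/-- the bump as an element of `monoPerm`. -/
def bumpPerm {u t t' v : ℚ} (hut : u < t) (htv : t < v) (hut' : u < t') (ht'v : t' < v) :
    ↥monoPerm :=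
  ⟨⟨bump u t t' v, bump u t' t v,
    bump_inv hut htv hut' ht'v, bump_inv hut' ht'v hut htv⟩,
    bump_mono hut htv hut' ht'v⟩

lemma bumpPerm_apply {u t t' v : ℚ} (hut : u < t) (htv : t < v) (hut' : u < t') (ht'v : t' < v)
    (x : ℚ) : ((bumpPerm hut htv hut' ht'v : Equiv.Perm ℚ)) x = bump u t t' v x := rfl

/-- density helper: a point just above `a`, below all elements of `s` above `a`. -/
lemma exists_above (s : Finset ℚ) (a : ℚ) :
    ∃ b, a < b ∧ ∀ c ∈ s, a < c → b < c := by
  classical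
  set s' := s.filter (fun c => a < c) with hs'
  by_cases h : s'.Nonempty
  · have hmin : a < s'.min' h := by
      exact (Finset.mem_filter.1 (s'.min'_mem h)).2
    obtain ⟨b, hab, hb⟩ := exists_between hmin
    refine ⟨b, hab, fun c hc hac => ?_⟩
    have hcs : c ∈ s' := Finset.mem_filter.2 ⟨hc, hac⟩
    exact lt_of_lt_of_le hb (s'.min'_le c hcs)
  · refine ⟨a + 1, by linarith, fun c hc hac => ?_⟩
    exact absurd ⟨c, Finset.mem_filter.2 ⟨hc, hac⟩⟩ h

lemma exists_below (s : Finset ℚ) (a : ℚ) :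
    ∃ b, b < a ∧ ∀ c ∈ s, c < a → c < b := by
  classical
  set s' := s.filter (fun c => c < a) with hs'
  by_cases h : s'.Nonempty
  · have hmax : s'.max' h < a := by
      exact (Finset.mem_filter.1 (s'.max'_mem h)).2
    obtain ⟨b, hb, hab⟩ := exists_between hmax
    refine ⟨b, hab, fun c hc hac => ?_⟩
    have hcs : c ∈ s' := Finset.mem_filter.2 ⟨hc, hac⟩
    exact lt_of_le_of_lt (s'.le_max' c hcs) hb
  · refine ⟨a - 1, by linarith, fun c hc hac => ?_⟩
    exact absurd ⟨c, Finset.mem_filter.2 ⟨hc, hac⟩⟩ h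

section Act

variable {X : Type*} (act : X → ↥monoPerm → X)

/-- `C` supports `x`. -/
def Supp (x : X) (C : Finset ℚ) : Prop :=
  ∀ π : ↥monoPerm, (∀ c ∈ C, (π : Equiv.Perm ℚ) c = c) → act x π = x

lemma act_inv (act_one : ∀ x : X, act x 1 = x)
    (act_mul : ∀ (x : X) (π σ : ↥monoPerm), act x (π * σ) = act (act x π) σ) (x : X) (π : ↥monoPerm) (h : act x π = x) : act x π⁻¹ = x := by
  have := act_mul x π π⁻¹
  rw [mul_inv_cancel, act_one, h] at this
  exact this.symm

/-- supports transport along symmetries of `x`. -/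
lemma supp_transport (act_one : ∀ x : X, act x 1 = x)
    (act_mul : ∀ (x : X) (π σ : ↥monoPerm), act x (π * σ) = act (act x π) σ) {x : X} {C : Finset ℚ} (hC : Supp act x C) {σ : ↥monoPerm}
    (hσ : act x σ = x) : Supp act x (C.image (σ : Equiv.Perm ℚ)) := by
  intro π hπ
  have hρ : act x (σ⁻¹ * π * σ) = x := by
    apply hC
    intro c hc
    have : (π : Equiv.Perm ℚ) ((σ : Equiv.Perm ℚ) c) = (σ : Equiv.Perm ℚ) c :=
      hπ _ (Finset.mem_image_of_mem _ hc)
    simp [Equiv.Perm.mul_apply, this]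
  have hfactor : π = σ * (σ⁻¹ * π * σ) * σ⁻¹ := by group
  rw [hfactor, act_mul, act_mul, hσ, hρ]
  exact act_inv act act_one act_mul x σ hσ

end Act
section Erase

variable {X : Type*} (act : X → ↥monoPerm → X)

lemma supp_erase (act_one : ∀ x : X, act x 1 = x)
    (act_mul : ∀ (x : X) (π σ : ↥monoPerm), act x (π * σ) = act (act x π) σ)
    {x : X} {C C' : Finset ℚ} {d : ℚ}
    (hC : Supp act x C) (hC' : Supp act x C') (hd : d ∈ C') (hdC : d ∉ C) :
    Supp act x (C'.erase d) := by
  classical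
  intro π hπ
  have hπmono : Monotone ⇑(π : Equiv.Perm ℚ) := π.2
  have hπsm : StrictMono ⇑(π : Equiv.Perm ℚ) :=
    hπmono.strictMono_of_injective (Equiv.injective _)
  set d₁ := (π : Equiv.Perm ℚ) d with hd₁
  by_cases hdd : d₁ = d
  · apply hC'
    intro c hc
    by_cases hcd : c = d
    · rw [hcd]; exact hdd
    · exact hπ c (Finset.mem_erase.2 ⟨hcd, hc⟩)
  have hlt : ∀ c ∈ C', c < d → c < d₁ := by
    intro c hc hcd
    have hfix : (π : Equiv.Perm ℚ) c = c := hπ c (Finset.mem_erase.2 ⟨ne_of_lt hcd, hc⟩)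
    calc c = (π : Equiv.Perm ℚ) c := hfix.symm
      _ < d₁ := hπsm hcd
  have hgt : ∀ c ∈ C', d < c → d₁ < c := by
    intro c hc hcd
    have hfix : (π : Equiv.Perm ℚ) c = c := hπ c (Finset.mem_erase.2 ⟨(ne_of_lt hcd).symm, hc⟩)
    calc d₁ < (π : Equiv.Perm ℚ) c := hπsm hcd
      _ = c := hfix
  set m := min d d₁ with hm
  set M := max d d₁ with hM
  have hmd : m ≤ d := min_le_left _ _
  have hmd₁ : m ≤ d₁ := min_le_right _ _
  have hdM : d ≤ M := le_max_left _ _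
  have hd₁M : d₁ ≤ M := le_max_right _ _
  have hmM : m < M := min_lt_max.2 (fun h => hdd h.symm)
  have hC'side : ∀ c ∈ C', c ≠ d → c < m ∨ M < c := by
    intro c hc hcd
    rcases lt_trichotomy c d with h | h | h
    · exact Or.inl (lt_min h (hlt c hc h))
    · exact absurd h hcd
    · exact Or.inr (max_lt h (hgt c hc h))
  -- right-hand clearing bump
  obtain ⟨v, hMv, hv⟩ := exists_above C' M
  have hdv : d < v := lt_of_le_of_lt hdM hMv
  have hd₁v : d₁ < v := lt_of_le_of_lt hd₁M hMv
  obtain ⟨t, hdt, ht⟩ := exists_above (insert v C) d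
  have htv : t < v := ht v (Finset.mem_insert_self _ _) hdv
  obtain ⟨t', hMt', ht'v⟩ := exists_between hMv
  have hdt' : d < t' := lt_of_le_of_lt hdM hMt'
  -- left-hand clearing bump
  obtain ⟨u, hum, hu⟩ := exists_below C' m
  have hud : u < d := lt_of_lt_of_le hum hmd
  obtain ⟨s, hsd, hs⟩ := exists_below (insert u C) d
  have hus : u < s := hs u (Finset.mem_insert_self _ _) hud
  obtain ⟨s', hus', hs'm⟩ := exists_between hum
  have hs'd : s' < d := lt_of_lt_of_le hs'm hmd
  set βp := bumpPerm hdt htv hdt' ht'v with hβp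
  set βm := bumpPerm hus hsd hus' hs'd with hβm
  set β : ↥monoPerm := βm * βp with hβ
  have hβc : ∀ c : ℚ, ((β : Equiv.Perm ℚ)) c = bump u s s' d (bump d t t' v c) := fun c => rfl
  have hβfix : ∀ c ∈ C', ((β : Equiv.Perm ℚ)) c = c := by
    intro c hc
    rw [hβc]
    rcases lt_trichotomy c d with h | h | h
    · have hcm : c < m := lt_min h (hlt c hc h)
      have hcu : c < u := hu c hc hcm
      rw [bump_out (Or.inl h.le), bump_out (Or.inl hcu.le)]
    · rw [bump_out (Or.inl h.le), bump_out (Or.inr h.ge)]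
    · have hcM : M < c := max_lt h (hgt c hc h)
      have hcv : v < c := hv c hc hcM
      rw [bump_out (Or.inr hcv.le), bump_out (Or.inr h.le)]
  have hβx : act x β = x := hC' β hβfix
  set C₂ := C.image ⇑(β : Equiv.Perm ℚ) with hC₂def
  have hC₂ : Supp act x C₂ := supp_transport act act_one act_mul hC hβx
  have hC₂side : ∀ b ∈ C₂, b < m ∨ M < b := by
    intro b hb
    obtain ⟨c, hcC, rfl⟩ := Finset.mem_image.1 hb
    rw [hβc]
    rcases lt_trichotomy c d with hcd | hcd | hcd
    · rw [bump_out (Or.inl hcd.le)]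
      rcases le_or_gt c u with hcu | hcu
      · rw [bump_out (Or.inl hcu)]; exact Or.inl (lt_of_le_of_lt hcu hum)
      · have hcs : c < s := hs c (Finset.mem_insert_of_mem hcC) hcd
        have hb2 := bump_low hus hsd hus' hcu hcs.le
        exact Or.inl (lt_of_le_of_lt hb2.2 hs'm)
    · exact absurd hcd.symm (fun h => hdC (h ▸ hcC))
    · rcases le_or_gt v c with hvc | hvc
      · rw [bump_out (Or.inr hvc), bump_out (Or.inr hcd.le)]
        exact Or.inr (lt_of_lt_of_le hMv hvc)
      · have htc : t < c := ht c (Finset.mem_insert_of_mem hcC) hcd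
        have hb2 := bump_high hdt htv ht'v htc hvc
        rw [bump_out (Or.inr (hdt'.trans hb2.1).le)]
        exact Or.inr (hMt'.trans hb2.1)
  set B := C₂ ∪ C'.erase d with hB
  have hBside : ∀ b ∈ B, b < m ∨ M < b := by
    intro b hb
    rcases Finset.mem_union.1 hb with h | h
    · exact hC₂side b h
    · obtain ⟨hne, hbC'⟩ := Finset.mem_erase.1 h
      exact hC'side b hbC' hne
  obtain ⟨v₂, hMv₂, hv₂⟩ := exists_above B M
  obtain ⟨u₂, hu₂m, hu₂⟩ := exists_below B m
  have hu₂d : u₂ < d := lt_of_lt_of_le hu₂m hmd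
  have hu₂d₁ : u₂ < d₁ := lt_of_lt_of_le hu₂m hmd₁
  have hdv₂ : d < v₂ := lt_of_le_of_lt hdM hMv₂
  have hd₁v₂ : d₁ < v₂ := lt_of_le_of_lt hd₁M hMv₂
  set σ := bumpPerm hu₂d hdv₂ hu₂d₁ hd₁v₂ with hσ
  have hσc : ∀ c : ℚ, ((σ : Equiv.Perm ℚ)) c = bump u₂ d d₁ v₂ c := fun c => rfl
  have hσB : ∀ b ∈ B, ((σ : Equiv.Perm ℚ)) b = b := by
    intro b hb
    rw [hσc]
    rcases hBside b hb with h | h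
    · exact bump_out (Or.inl (hu₂ b hb h).le)
    · exact bump_out (Or.inr (hv₂ b hb h).le)
  have hσx : act x σ = x := hC₂ σ (fun b hb => hσB b (Finset.mem_union_left _ hb))
  have hσd : ((σ : Equiv.Perm ℚ)) d = d₁ := by
    rw [hσc]; exact bump_t hu₂d hdv₂
  have hagree : ∀ c ∈ C', ((σ : Equiv.Perm ℚ)) c = (π : Equiv.Perm ℚ) c := by
    intro c hc
    by_cases hcd : c = d
    · subst hcd; rw [hσd, hd₁]
    · rw [hσB c (Finset.mem_union_right _ (Finset.mem_erase.2 ⟨hcd, hc⟩)),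
        hπ c (Finset.mem_erase.2 ⟨hcd, hc⟩)]
  have hρ : act x (σ⁻¹ * π) = x := by
    apply hC'
    intro c hc
    have hcoe : ((σ⁻¹ * π : ↥monoPerm) : Equiv.Perm ℚ) c
        = (σ : Equiv.Perm ℚ)⁻¹ ((π : Equiv.Perm ℚ) c) := by
      simp
    rw [hcoe, ← hagree c hc, Equiv.Perm.inv_def, Equiv.symm_apply_apply]
  calc act x π = act x (σ * (σ⁻¹ * π)) := by rw [mul_inv_cancel_left]
    _ = act (act x σ) (σ⁻¹ * π) := act_mul _ _ _
    _ = x := by rw [hσx]; exact hρ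

end Erase
section Inter

variable {X : Type*} (act : X → ↥monoPerm → X)

lemma supp_inter (act_one : ∀ x : X, act x 1 = x)
    (act_mul : ∀ (x : X) (π σ : ↥monoPerm), act x (π * σ) = act (act x π) σ)
    {x : X} (C C' : Finset ℚ) (hC : Supp act x C) (hC' : Supp act x C') :
    Supp act x (C ∩ C') := by
  classical
  suffices H : ∀ (n : ℕ) (C' : Finset ℚ), (C' \ C).card = n →
      Supp act x C' → Supp act x (C ∩ C') from H _ C' rfl hC'
  intro n
  induction n with
  | zero =>
    intro C' hcard hC'
    have hsub : C' ⊆ C := by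
      rw [← Finset.sdiff_eq_empty_iff_subset]
      exact Finset.card_eq_zero.1 hcard
    rw [Finset.inter_eq_right.2 hsub]
    exact hC'
  | succ n ih =>
    intro C' hcard hC'
    have hne : (C' \ C).Nonempty := Finset.card_pos.1 (by omega)
    obtain ⟨d, hd⟩ := hne
    obtain ⟨hdC', hdC⟩ := Finset.mem_sdiff.1 hd
    have h2 : Supp act x (C'.erase d) := supp_erase act act_one act_mul hC hC' hdC' hdC
    have hcard2 : ((C'.erase d) \ C).card = n := by
      rw [Finset.erase_sdiff_comm, Finset.card_erase_of_mem hd, hcard]; omega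
    have h3 := ih (C'.erase d) hcard2 h2
    have heq : C ∩ C'.erase d = C ∩ C' := by
      ext e
      simp only [Finset.mem_inter, Finset.mem_erase]
      exact ⟨fun h => ⟨h.1, h.2.2⟩, fun h => ⟨h.1, fun he => hdC (he ▸ h.1), h.2⟩⟩
    rwa [heq] at h3

end Inter

theorem total_order_symmetry_least_supports' {X : Type*}
    (act : X → ↥monoPerm → X)
    (act_one : ∀ x : X, act x 1 = x)
    (act_mul : ∀ (x : X) (π σ : ↥monoPerm), act x (π * σ) = act (act x π) σ) :
    (∀ (x : X) (C C' : Finset ℚ),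
      (∀ π : ↥monoPerm, (∀ c ∈ C, (π : Equiv.Perm ℚ) c = c) → act x π = x) →
      (∀ π : ↥monoPerm, (∀ c ∈ C', (π : Equiv.Perm ℚ) c = c) → act x π = x) →
      ∀ π : ↥monoPerm, (∀ c ∈ C ∩ C', (π : Equiv.Perm ℚ) c = c) → act x π = x) ∧
    ((∀ x : X, ∃ C : Finset ℚ,
        ∀ π : ↥monoPerm, (∀ c ∈ C, (π : Equiv.Perm ℚ) c = c) → act x π = x) →
      ∀ x : X, ∃ C : Finset ℚ,
        (∀ π : ↥monoPerm, (∀ c ∈ C, (π : Equiv.Perm ℚ) c = c) → act x π = x) ∧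
        ∀ C' : Finset ℚ,
          (∀ π : ↥monoPerm, (∀ c ∈ C', (π : Equiv.Perm ℚ) c = c) → act x π = x) →
          C ⊆ C') := by
  classical
  constructor
  · intro x C C' hC hC'
    exact supp_inter act act_one act_mul C C' hC hC'
  · intro hnom x
    have hex : ∃ n : ℕ, ∃ C : Finset ℚ, C.card = n ∧ Supp act x C := by
      obtain ⟨C, hC⟩ := hnom x
      exact ⟨C.card, C, rfl, hC⟩
    obtain ⟨C₀, hcard₀, hC₀⟩ := Nat.find_spec hex
    refine ⟨C₀, hC₀, ?_⟩
    intro C' hC'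
    have hint : Supp act x (C₀ ∩ C') := supp_inter act act_one act_mul C₀ C' hC₀ hC'
    have h1 : Nat.find hex ≤ (C₀ ∩ C').card := Nat.find_min' hex ⟨C₀ ∩ C', rfl, hint⟩
    have h2 : (C₀ ∩ C').card ≤ C₀.card := Finset.card_le_card Finset.inter_subset_left
    have heq : C₀ ∩ C' = C₀ :=
      Finset.eq_of_subset_of_card_le Finset.inter_subset_left (by omega)
    exact heq ▸ Finset.inter_subset_right
end TOS

/-- the total order symmetry admits least supports.  For D = ℚ and G the
group of monotone bijections of ℚ: in any G-set, the intersection of two finite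
supports of an element is again a support; consequently, in any nominal G-set every
element has a least finite support. -/
theorem total_order_symmetry_least_supports {X : Type*}
    (act : X → ↥monoPerm → X)
    (act_one : ∀ x : X, act x 1 = x)
    (act_mul : ∀ (x : X) (π σ : ↥monoPerm), act x (π * σ) = act (act x π) σ) :
    -- finite supports are closed under intersection
    (∀ (x : X) (C C' : Finset ℚ),
      (∀ π : ↥monoPerm, (∀ c ∈ C, (π : Equiv.Perm ℚ) c = c) → act x π = x) →
      (∀ π : ↥monoPerm, (∀ c ∈ C', (π : Equiv.Perm ℚ) c = c) → act x π = x) →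
      ∀ π : ↥monoPerm, (∀ c ∈ C ∩ C', (π : Equiv.Perm ℚ) c = c) → act x π = x) ∧
    -- consequently: if X is nominal then every element has a least finite support
    ((∀ x : X, ∃ C : Finset ℚ,
        ∀ π : ↥monoPerm, (∀ c ∈ C, (π : Equiv.Perm ℚ) c = c) → act x π = x) →
      ∀ x : X, ∃ C : Finset ℚ,
        (∀ π : ↥monoPerm, (∀ c ∈ C, (π : Equiv.Perm ℚ) c = c) → act x π = x) ∧
        ∀ C' : Finset ℚ,
          (∀ π : ↥monoPerm, (∀ c ∈ C', (π : Equiv.Perm ℚ) c = c) → act x π = x) →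
          C ⊆ C') :=
  TOS.total_order_symmetry_least_supports' act act_one act_mul
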